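/- Let M be a Riemannian manifold with volume measure V and f: M → M a diffeomorphism such that the Jacobian A (defined by f*V = A·V) satisfies |A| ≤ a for some constant a ∈ (0,1). Then the set B(f) of points x ∈ M such that the backward orbit (f^{-n}(x))_{n∈ℕ} does not tend to infinity has V-measure zero. -/

import Mathlib

open MeasureTheory Set Filter

/-- Let `M` be a Riemannian manifold (abstractly: a locally compact, σ-compact space with a
Borel measure `μ` finite on compacts) and `f` a diffeomorphism whose Jacobian is bounded by
`a ∈ (0,1)` (abstractly: `μ(f(s)) ≤ a·μ(s)`). Then the set `B(f)` of points whose backward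
orbit does not tend to infinity has measure zero. -/
theorem backward_nonescaping_set_null
    {M : Type*} [TopologicalSpace M] [MeasurableSpace M] [BorelSpace M]
    [T2Space M] [LocallyCompactSpace M] [SigmaCompactSpace M]
    (μ : Measure M) [IsFiniteMeasureOnCompacts μ]
    (f : M ≃ₜ M)
    (a : ℝ) (ha : a ∈ Set.Ioo (0:ℝ) 1)
    (hcontr : ∀ s : Set M, MeasurableSet s → μ (f '' s) ≤ ENNReal.ofReal a * μ s) :
    μ {x : M | ¬ ∀ K : Set M, IsCompact K →
        ∀ᶠ n : ℕ in atTop, (f.symm : M → M)^[n] x ∉ K} = 0 := by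
  set E := CompactExhaustion.choice M with hE
  -- measure of n-th forward image of a compact set
  have hcpt : ∀ (K : Set M), IsCompact K → ∀ n : ℕ, IsCompact ((f : M → M)^[n] '' K) := by
    intro K hK n
    exact hK.image (f.continuous.iterate n)
  have hiter : ∀ (K : Set M), IsCompact K → ∀ n : ℕ,
      μ ((f : M → M)^[n] '' K) ≤ (ENNReal.ofReal a) ^ n * μ K := by
    intro K hK n
    induction n with
    | zero => simp
    | succ n ih =>
      have h1 : (f : M → M)^[n+1] '' K = f '' ((f : M → M)^[n] '' K) := by
        rw [Function.iterate_succ', Set.image_comp]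
      rw [h1]
      calc μ (f '' ((f : M → M)^[n] '' K))
          ≤ ENNReal.ofReal a * μ ((f : M → M)^[n] '' K) :=
            hcontr _ (hcpt K hK n).measurableSet
        _ ≤ ENNReal.ofReal a * ((ENNReal.ofReal a) ^ n * μ K) := by
            exact mul_le_mul_right ih _
        _ = (ENNReal.ofReal a) ^ (n+1) * μ K := by ring
  have ha1 : ENNReal.ofReal a < 1 := ENNReal.ofReal_lt_one.2 ha.2
  -- each limsup is null
  have hnull : ∀ k : ℕ, μ (limsup (fun n => (f : M → M)^[n] '' (E k)) atTop) = 0 := by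
    intro k
    apply measure_limsup_atTop_eq_zero
    have hsum : ∑' n : ℕ, μ ((f : M → M)^[n] '' (E k))
        ≤ ∑' n : ℕ, (ENNReal.ofReal a) ^ n * μ (E k) :=
      ENNReal.tsum_le_tsum fun n => hiter _ (E.isCompact k) n
    refine ne_top_of_le_ne_top ?_ hsum
    rw [ENNReal.tsum_mul_right, ENNReal.tsum_geometric]
    refine ENNReal.mul_ne_top (ENNReal.inv_ne_top.2 ?_) (E.isCompact k).measure_lt_top.ne
    exact (tsub_pos_of_lt ha1).ne'
  -- the bad set is contained in the union of the limsups
  have hsub : {x : M | ¬ ∀ K : Set M, IsCompact K →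
      ∀ᶠ n : ℕ in atTop, (f.symm : M → M)^[n] x ∉ K}
      ⊆ ⋃ k : ℕ, limsup (fun n => (f : M → M)^[n] '' (E k)) atTop := by
    intro x hx
    push_neg at hx
    obtain ⟨K, hK, hfreq⟩ := hx
    obtain ⟨k, hKk⟩ := E.exists_superset_of_isCompact hK
    refine Set.mem_iUnion.2 ⟨k, ?_⟩
    rw [Filter.mem_limsup_iff_frequently_mem]
    refine hfreq.mono fun n hn => ?_
    refine ⟨(f.symm : M → M)^[n] x, hKk hn, ?_⟩
    have : Function.LeftInverse (f : M → M)^[n] ((f.symm : M → M))^[n] :=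
      Function.LeftInverse.iterate f.apply_symm_apply n
    exact this x
  refine le_antisymm ?_ zero_le
  calc μ _ ≤ μ (⋃ k : ℕ, limsup (fun n => (f : M → M)^[n] '' (E k)) atTop) :=
        measure_mono hsub
    _ = 0 := measure_iUnion_null fun k => hnull k
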